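/- Let κ > 0 and α* > 0 be real numbers and a, b ∈ ℂ. Define w(r,θ) = ( a·e^{iκ·log r} + b·e^{−iκ·log r} )·cosh(κθ) for r > 0. Then for every r > 0, ∫₀^{α*} ( ∂_rw(r,θ)·conj(w(r,θ)) − w(r,θ)·conj(∂_rw(r,θ)) ) r dθ = 2iκ·(|a|² − |b|²)·∫₀^{α*} cosh²(κθ) dθ. In particular this quantity vanishes if and only if |a| = |b|. -/

import Mathlib

/-- With `w(r,θ) = (a·e^{iκ log r} + b·e^{−iκ log r})·cosh(κθ)`
(`a, b ∈ ℂ`), for every `r > 0`,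
`∫₀^{α*}(∂_r w·conj w − w·conj ∂_r w) r dθ = 2iκ(|a|²−|b|²)∫₀^{α*}cosh²(κθ)dθ`;
in particular this quantity vanishes if and only if `|a| = |b|`. -/
theorem symplectic_form_complex (κ αs : ℝ) (hκ : 0 < κ) (hα : 0 < αs) (a b : ℂ) :
    let w : ℝ → ℝ → ℂ := fun r θ =>
      (a * Complex.exp (Complex.I * κ * Real.log r)
        + b * Complex.exp (-(Complex.I * κ * Real.log r))) * (Real.cosh (κ * θ) : ℂ)
    ∀ r > (0 : ℝ),
      (∫ θ in (0:ℝ)..αs,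
          (deriv (fun s => w s θ) r * (starRingEnd ℂ) (w r θ)
            - w r θ * (starRingEnd ℂ) (deriv (fun s => w s θ) r)) * (r : ℂ))
        = 2 * Complex.I * κ * ((‖a‖ ^ 2 - ‖b‖ ^ 2 : ℝ) : ℂ)
            * ((∫ θ in (0:ℝ)..αs, Real.cosh (κ * θ) ^ 2 : ℝ) : ℂ) ∧
      ((∫ θ in (0:ℝ)..αs,
          (deriv (fun s => w s θ) r * (starRingEnd ℂ) (w r θ)
            - w r θ * (starRingEnd ℂ) (deriv (fun s => w s θ) r)) * (r : ℂ)) = 0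
        ↔ ‖a‖ = ‖b‖) := by
  intro w r hr
  set E := Complex.exp (Complex.I * κ * Real.log r) with hE
  set F := Complex.exp (-(Complex.I * κ * Real.log r)) with hF
  have hlog : HasDerivAt Real.log r⁻¹ r := Real.hasDerivAt_log hr.ne'
  have h1 : HasDerivAt (fun s : ℝ => ((Real.log s : ℝ) : ℂ)) ((r⁻¹ : ℝ) : ℂ) r :=
    hlog.ofReal_comp
  have hdE : HasDerivAt (fun s : ℝ => Complex.exp (Complex.I * κ * Real.log s))
      (E * (Complex.I * κ * (r⁻¹ : ℝ))) r := by
    have := ((h1.const_mul (Complex.I * κ))).cexp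
    simpa [hE, mul_assoc] using this
  have hdF : HasDerivAt (fun s : ℝ => Complex.exp (-(Complex.I * κ * Real.log s)))
      (F * (-(Complex.I * κ * (r⁻¹ : ℝ)))) r := by
    have := ((h1.const_mul (Complex.I * κ))).neg.cexp
    simpa [hF, mul_assoc] using this
  have hderiv : ∀ θ : ℝ, deriv (fun s => w s θ) r
      = (a * (E * (Complex.I * κ * (r⁻¹ : ℝ))) + b * (F * (-(Complex.I * κ * (r⁻¹ : ℝ)))))
        * (Real.cosh (κ * θ) : ℂ) := by
    intro θ
    exact (((hdE.const_mul a).add (hdF.const_mul b)).mul_const _).deriv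
  have hEF : E * F = 1 := by
    rw [hE, hF, ← Complex.exp_add]; simp
  have hcE : (starRingEnd ℂ) E = F := by
    rw [hE, hF, ← Complex.exp_conj]; congr 1
    simp [Complex.conj_I]
  have hcF : (starRingEnd ℂ) F = E := by
    rw [hE, hF, ← Complex.exp_conj]; congr 1
    simp [Complex.conj_I]
  have key : ∀ θ : ℝ,
      (deriv (fun s => w s θ) r * (starRingEnd ℂ) (w r θ)
        - w r θ * (starRingEnd ℂ) (deriv (fun s => w s θ) r)) * (r : ℂ)
      = (2 * Complex.I * κ * (((‖a‖) ^ 2 - (‖b‖) ^ 2 : ℝ) : ℂ))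
          * ((Real.cosh (κ * θ) ^ 2 : ℝ) : ℂ) := by
    intro θ
    rw [hderiv θ]
    simp only [w, map_mul, map_add, Complex.conj_ofReal, hcE, hcF, map_mul, map_neg,
      Complex.conj_I]
    rw [← hE, ← hF, hcE, hcF]
    have ha : ((‖a‖ : ℝ) : ℂ) ^ 2 = a * (starRingEnd ℂ) a := by
      rw [← Complex.ofReal_pow, Complex.sq_norm]; exact (Complex.mul_conj a).symm
    have hb : ((‖b‖ : ℝ) : ℂ) ^ 2 = b * (starRingEnd ℂ) b := by
      rw [← Complex.ofReal_pow, Complex.sq_norm]; exact (Complex.mul_conj b).symm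
    have hrne : ((r : ℝ) : ℂ) ≠ 0 := by exact_mod_cast hr.ne'
    have hri : ((r : ℝ) : ℂ)⁻¹ * ((r : ℝ) : ℂ) = 1 := inv_mul_cancel₀ hrne
    push_cast
    rw [ha, hb]
    linear_combination (2 * Complex.I * (κ : ℂ) * Complex.cosh ((κ : ℂ) * (θ : ℂ)) ^ 2
        * (a * (starRingEnd ℂ) a - b * (starRingEnd ℂ) b) * E * F) * hri
      + (2 * Complex.I * (κ : ℂ) * Complex.cosh ((κ : ℂ) * (θ : ℂ)) ^ 2
        * (a * (starRingEnd ℂ) a - b * (starRingEnd ℂ) b)) * hEF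
  have heq : (∫ θ in (0:ℝ)..αs,
      (deriv (fun s => w s θ) r * (starRingEnd ℂ) (w r θ)
        - w r θ * (starRingEnd ℂ) (deriv (fun s => w s θ) r)) * (r : ℂ))
      = 2 * Complex.I * κ * (((‖a‖) ^ 2 - (‖b‖) ^ 2 : ℝ) : ℂ)
        * ((∫ θ in (0:ℝ)..αs, Real.cosh (κ * θ) ^ 2 : ℝ) : ℂ) := by
    rw [intervalIntegral.integral_congr (g := fun θ =>
      (2 * Complex.I * κ * (((‖a‖) ^ 2 - (‖b‖) ^ 2 : ℝ) : ℂ))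
        * ((Real.cosh (κ * θ) ^ 2 : ℝ) : ℂ)) (fun θ _ => key θ)]
    rw [intervalIntegral.integral_const_mul, intervalIntegral.integral_ofReal]
  refine ⟨heq, ?_⟩
  rw [heq]
  have hJ : 0 < ∫ θ in (0:ℝ)..αs, Real.cosh (κ * θ) ^ 2 := by
    apply intervalIntegral.intervalIntegral_pos_of_pos_on
    · exact ((Real.continuous_cosh.comp (continuous_const.mul continuous_id)).pow 2).intervalIntegrable _ _
    · intro x _
      have := Real.cosh_pos (x := κ * x)
      positivity
    · exact hα
  have hJ' : ((∫ θ in (0:ℝ)..αs, Real.cosh (κ * θ) ^ 2 : ℝ) : ℂ) ≠ 0 := by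
    exact_mod_cast hJ.ne'
  have hκ' : ((κ : ℝ) : ℂ) ≠ 0 := by exact_mod_cast hκ.ne'
  constructor
  · intro h
    have hx : (((‖a‖) ^ 2 - (‖b‖) ^ 2 : ℝ) : ℂ) = 0 := by
      simpa [mul_eq_zero, Complex.I_ne_zero, hκ', hJ'] using h
    have hx' : (‖a‖) ^ 2 = (‖b‖) ^ 2 := by
      have : ((‖a‖) ^ 2 - (‖b‖) ^ 2 : ℝ) = 0 := by exact_mod_cast hx
      linarith
    calc ‖a‖ = Real.sqrt ((‖a‖) ^ 2) :=
          (Real.sqrt_sq (norm_nonneg a)).symm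
      _ = Real.sqrt ((‖b‖) ^ 2) := by rw [hx']
      _ = ‖b‖ := Real.sqrt_sq (norm_nonneg b)
  · intro h
    simp [h]
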